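/- arXiv:1505.06892 — 2 statements merged into one kernel-verified Lean document; each statement's English description precedes it below -/
import Mathlib

section
/- Let V be a real inner product space of dimension 2m, J : V → V with J² = −id compatible with the inner product, and A : V → V self-adjoint positive commuting with J with all eigenvalues ≤ c for some c > 0. Then det(A)^{1/2} · ‖A^{-1}‖ ≤ c^{m-1}, where ‖A^{-1}‖ is the operator norm of A^{-1}. -/
open RealInnerProductSpace

/-- On a `2m`-dimensional real inner product space, if `J² = -id` is compatible
with the inner product and `A` is a positive self-adjoint operator commuting
with `J` whose eigenvalues are all `≤ c`, then `det(A)^{1/2}·‖A⁻¹‖ ≤ c^{m-1}`. -/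
theorem stmt9 {V : Type*} [NormedAddCommGroup V] [InnerProductSpace ℝ V]
    [FiniteDimensional ℝ V]
    (m : ℕ) (hm : 1 ≤ m) (hdim : Module.finrank ℝ V = 2 * m)
    (J : V →ₗ[ℝ] V) (hJ : J ∘ₗ J = -LinearMap.id)
    (hJiso : ∀ v w : V, ⟪J v, J w⟫ = ⟪v, w⟫)
    (A B : V →L[ℝ] V)
    (hA : ∀ v w : V, ⟪A v, w⟫ = ⟪v, A w⟫)
    (hpos : ∀ v : V, v ≠ 0 → 0 < ⟪A v, v⟫)
    (hcomm : ∀ v : V, A (J v) = J (A v))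
    (c : ℝ) (hc : 0 < c)
    (heig : ∀ (lam : ℝ) (v : V), v ≠ 0 → A v = lam • v → lam ≤ c)
    (hB : ∀ v : V, A (B v) = v ∧ B (A v) = v) :
    Real.sqrt (LinearMap.det (A : V →ₗ[ℝ] V)) * ‖B‖ ≤ c ^ (m - 1) := by
  classical
  have hT : (A : V →ₗ[ℝ] V).IsSymmetric := fun x y => hA x y
  let b : OrthonormalBasis (Fin (2 * m)) ℝ V := hT.eigenvectorBasis hdim
  let lam : Fin (2 * m) → ℝ := hT.eigenvalues hdim
  have hAb : ∀ i, A (b i) = lam i • b i := fun i => hT.apply_eigenvectorBasis hdim i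
  have hb1 : ∀ i, ‖b i‖ = 1 := fun i => b.orthonormal.1 i
  have hbne : ∀ i, b i ≠ 0 := by
    intro i h
    have := hb1 i
    rw [h, norm_zero] at this
    norm_num at this
  have hposl : ∀ i, 0 < lam i := by
    intro i
    have h := hpos (b i) (hbne i)
    rw [hAb i, real_inner_smul_left, real_inner_self_eq_norm_sq, hb1 i] at h
    simpa using h
  have hle : ∀ i, lam i ≤ c := fun i => heig (lam i) (b i) (hbne i) (hAb i)
  have hrepr : ∀ (u : V) (i : Fin (2 * m)), b.repr (A u) i = lam i * b.repr u i :=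
    fun u i => hT.eigenvectorBasis_apply_self_apply hdim u i
  have hne : (Finset.univ : Finset (Fin (2 * m))).Nonempty :=
    ⟨⟨0, by omega⟩, Finset.mem_univ _⟩
  obtain ⟨i0, -, hmin⟩ := Finset.exists_min_image Finset.univ lam hne
  have hmin' : ∀ j, lam i0 ≤ lam j := fun j => hmin j (Finset.mem_univ j)
  -- operator norm bound on B
  have hnormB : ‖B‖ ≤ (lam i0)⁻¹ := by
    apply ContinuousLinearMap.opNorm_le_bound _ (inv_nonneg.2 (hposl i0).le)
    intro v
    have hAu : A (B v) = v := (hB v).1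
    set u := B v with hu
    have key : lam i0 * ‖u‖ ≤ ‖A u‖ := by
      have h1 : ‖A u‖ = ‖b.repr (A u)‖ := (b.repr.norm_map _).symm
      have h2 : ‖u‖ = ‖b.repr u‖ := (b.repr.norm_map _).symm
      rw [h1, h2, EuclideanSpace.norm_eq, EuclideanSpace.norm_eq,
        ← Real.sqrt_sq (le_of_lt (hposl i0)), ← Real.sqrt_mul (by positivity)]
      apply Real.sqrt_le_sqrt
      rw [Finset.mul_sum]
      apply Finset.sum_le_sum
      intro i _
      rw [hrepr u i, norm_mul, mul_pow]
      gcongr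
      · exact (hposl i0).le
      · rw [Real.norm_eq_abs]
        exact (hmin' i).trans (le_abs_self _)
    calc ‖u‖ = (lam i0)⁻¹ * (lam i0 * ‖u‖) := by
          rw [inv_mul_cancel_left₀ (hposl i0).ne']
      _ ≤ (lam i0)⁻¹ * ‖A u‖ := by
          gcongr
          exact inv_nonneg.2 (hposl i0).le
      _ = (lam i0)⁻¹ * ‖v‖ := by rw [hAu]
  -- determinant
  have hdet : LinearMap.det (A : V →ₗ[ℝ] V) = ∏ i, lam i := by
    have hmat : LinearMap.toMatrix b.toBasis b.toBasis (A : V →ₗ[ℝ] V)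
        = Matrix.diagonal lam := by
      ext i j
      rw [LinearMap.toMatrix_apply]
      simp only [OrthonormalBasis.coe_toBasis, ContinuousLinearMap.coe_coe]
      rw [hAb j, map_smul, ← OrthonormalBasis.coe_toBasis b, Module.Basis.repr_self]
      simp only [Finsupp.smul_single, smul_eq_mul, mul_one, Finsupp.single_apply,
        Matrix.diagonal_apply]
      by_cases h : i = j
      · subst h; simp
      · simp [h, Ne.symm h]
    rw [← LinearMap.det_toMatrix b.toBasis, hmat, Matrix.det_diagonal]
  -- there is a second index with the minimal eigenvalue
  obtain ⟨j0, hji, hjeq⟩ : ∃ j ≠ i0, lam j = lam i0 := by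
    by_contra hcon
    push_neg at hcon
    set w := J (b i0) with hwdef
    have hw : A w = lam i0 • w := by
      rw [hwdef, hcomm (b i0), hAb i0, map_smul]
    have hcj : ∀ jj, jj ≠ i0 → b.repr w jj = 0 := by
      intro jj hjj
      have h1 : lam jj * b.repr w jj = lam i0 * b.repr w jj := by
        have h2 := hrepr w jj
        rw [hw] at h2
        rw [← h2, map_smul]
        rfl
      by_contra hc0
      exact hcon jj hjj (mul_right_cancel₀ hc0 h1)
    set t := b.repr w i0 with htdef
    have hwval : w = t • b i0 := by
      conv_lhs => rw [← b.sum_repr w]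
      rw [Finset.sum_eq_single i0]
      · intro jj _ hjj
        rw [hcj jj hjj, zero_smul]
      · intro h
        exact absurd (Finset.mem_univ i0) h
    have hJw : J w = -(b i0) := by
      have := LinearMap.ext_iff.1 hJ (b i0)
      simpa using this
    have hJw2 : J w = t • w := by
      conv_lhs => rw [hwval]
      rw [map_smul, ← hwdef]
    have hsq : (t ^ 2) • b i0 = -(b i0) := by
      rw [← hJw, hJw2, hwval, smul_smul, ← pow_two]
    have hz : (t ^ 2 + 1) • b i0 = 0 := by
      rw [add_smul, hsq, one_smul, neg_add_cancel]
    have ht : t ^ 2 + 1 = 0 := by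
      rcases smul_eq_zero.1 hz with h | h
      · exact h
      · exact absurd h (hbne i0)
    nlinarith [sq_nonneg t]
  -- product estimate
  have hsub : ({i0, j0} : Finset (Fin (2 * m))) ⊆ Finset.univ := Finset.subset_univ _
  have hcardp : ({i0, j0} : Finset (Fin (2 * m))).card = 2 := by
    rw [Finset.card_insert_of_notMem (by simpa using (Ne.symm hji)), Finset.card_singleton]
  have hcardsdiff : (Finset.univ \ ({i0, j0} : Finset (Fin (2 * m)))).card = 2 * (m - 1) := by
    rw [Finset.card_sdiff_of_subset hsub, hcardp, Finset.card_univ, Fintype.card_fin]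
    omega
  have hprod : ∏ i, lam i ≤ lam i0 ^ 2 * c ^ (2 * (m - 1)) := by
    rw [← Finset.prod_sdiff hsub]
    have h1 : ∏ i ∈ ({i0, j0} : Finset (Fin (2 * m))), lam i = lam i0 ^ 2 := by
      rw [Finset.prod_pair (Ne.symm hji), hjeq, pow_two]
    have h2 : ∏ i ∈ Finset.univ \ ({i0, j0} : Finset (Fin (2 * m))), lam i
        ≤ c ^ (2 * (m - 1)) := by
      rw [← hcardsdiff]
      calc (∏ i ∈ Finset.univ \ ({i0, j0} : Finset (Fin (2 * m))), lam i)
          ≤ ∏ _i ∈ Finset.univ \ ({i0, j0} : Finset (Fin (2 * m))), c :=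
            Finset.prod_le_prod (fun i _ => (hposl i).le) (fun i _ => hle i)
        _ = _ := by rw [Finset.prod_const]
    rw [h1, mul_comm]
    exact mul_le_mul_of_nonneg_left h2 (by positivity)
  -- finish
  have hsqrt : Real.sqrt (LinearMap.det (A : V →ₗ[ℝ] V)) ≤ lam i0 * c ^ (m - 1) := by
    rw [hdet]
    calc Real.sqrt (∏ i, lam i) ≤ Real.sqrt (lam i0 ^ 2 * c ^ (2 * (m - 1))) :=
          Real.sqrt_le_sqrt hprod
      _ = lam i0 * c ^ (m - 1) := by
          rw [Real.sqrt_mul (by positivity), Real.sqrt_sq (hposl i0).le,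
            show 2 * (m - 1) = (m - 1) * 2 by ring, pow_mul, Real.sqrt_sq (by positivity)]
  calc Real.sqrt (LinearMap.det (A : V →ₗ[ℝ] V)) * ‖B‖
      ≤ (lam i0 * c ^ (m - 1)) * (lam i0)⁻¹ :=
        mul_le_mul hsqrt hnormB (norm_nonneg _)
          (mul_nonneg (hposl i0).le (by positivity))
    _ = c ^ (m - 1) := by
        rw [mul_comm (lam i0), mul_assoc, mul_inv_cancel₀ (hposl i0).ne', mul_one]
end

section
/- Let (M,g) be a Riemannian manifold with μ_g(M) < ∞, and suppose the constant function 1 lies in W^{1,2}_0(M,g) (the closure of C^∞_c(M) in the Sobolev W^{1,2}-norm). Then (M,g) is 2-parabolic: there is a sequence φ_n ∈ Lip_c(M) with 0 ≤ φ_n ≤ 1, φ_n → 1 a.e., and ∫ |dφ_n|²_{g*} dμ_g → 0. -/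
open MeasureTheory ENNReal Filter

/-- The clamp function to `[0,1]`. -/
noncomputable def clamp01 : ℝ → ℝ := fun t => max 0 (min t 1)

lemma clamp01_lip : LipschitzWith 1 clamp01 :=
  (LipschitzWith.id.min_const 1).const_max 0

lemma clamp01_zero : clamp01 0 = 0 := by simp [clamp01]

lemma clamp01_one : clamp01 1 = 1 := by simp [clamp01]

lemma clamp01_nonneg (t : ℝ) : 0 ≤ clamp01 t := le_max_left _ _

lemma clamp01_le_one (t : ℝ) : clamp01 t ≤ 1 :=
  max_le zero_le_one (min_le_right _ _)

lemma clamp01_continuous : Continuous clamp01 := clamp01_lip.continuous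

/-- If `μ_g(M) < ∞` and the constant function `1` lies in `W^{1,2}_0(M,g)`
(i.e. it is approximated in the `W^{1,2}`-norm by compactly supported
functions), then `(M,g)` is `2`-parabolic:  there is a sequence
`φ_n ∈ Lip_c(M)` with `0 ≤ φ_n ≤ 1`, `φ_n → 1` a.e. and
`∫ |dφ_n|² dμ → 0`.  The Riemannian energy density `|d·|_{g*}` is abstracted
as an operator `D` which is nonnegative and contracts under postcomposition
with `1`-Lipschitz functions. -/
theorem stmt15 {M : Type*} [MetricSpace M] [MeasurableSpace M] [BorelSpace M]
    (μ : Measure M) [IsFiniteMeasure μ]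
    (D : (M → ℝ) → M → ℝ)
    (hDnn : ∀ (f : M → ℝ) (x : M), 0 ≤ D f x)
    (hDcontract : ∀ (f : M → ℝ) (φ : ℝ → ℝ), LipschitzWith 1 φ →
      ∀ x : M, D (φ ∘ f) x ≤ D f x)
    (ψ : ℕ → M → ℝ)
    (hψlip : ∀ n, ∃ L, LipschitzWith L (ψ n))
    (hψsupp : ∀ n, HasCompactSupport (ψ n))
    (hψL2 : Tendsto (fun n => ∫⁻ x, ENNReal.ofReal (|ψ n x - 1| ^ (2 : ℝ)) ∂μ)
      atTop (nhds 0))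
    (hψD : Tendsto (fun n => ∫⁻ x, ENNReal.ofReal (D (ψ n) x ^ (2 : ℝ)) ∂μ)
      atTop (nhds 0)) :
    ∃ φ : ℕ → M → ℝ,
      (∀ n, (∃ L, LipschitzWith L (φ n)) ∧ HasCompactSupport (φ n) ∧
        ∀ x, 0 ≤ φ n x ∧ φ n x ≤ 1) ∧
      (∀ᵐ x ∂μ, Tendsto (fun n => φ n x) atTop (nhds 1)) ∧
      Tendsto (fun n => ∫⁻ x, ENNReal.ofReal (D (φ n) x ^ (2 : ℝ)) ∂μ)
        atTop (nhds 0) := by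
  -- extract a subsequence along which the L² approximation is summably fast
  obtain ⟨s, hs_mono, hs⟩ :
      ∃ s : ℕ → ℕ, StrictMono s ∧ ∀ n,
        (∫⁻ x, ENNReal.ofReal (|ψ (s n) x - 1| ^ (2 : ℝ)) ∂μ) ≤ (2 : ℝ≥0∞)⁻¹ ^ n := by
    apply Filter.extraction_forall_of_eventually
      (P := fun n k => (∫⁻ x, ENNReal.ofReal (|ψ k x - 1| ^ (2 : ℝ)) ∂μ) ≤ (2 : ℝ≥0∞)⁻¹ ^ n)
    intro n
    have h := hψL2.eventually_le_const (show (0 : ℝ≥0∞) < (2 : ℝ≥0∞)⁻¹ ^ n from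
      ENNReal.pow_pos (ENNReal.inv_pos.mpr ENNReal.ofNat_ne_top) n)
    exact h
  refine ⟨fun n x => clamp01 (ψ (s n) x), ?_, ?_, ?_⟩
  · intro n
    refine ⟨?_, ?_, fun x => ⟨clamp01_nonneg _, clamp01_le_one _⟩⟩
    · obtain ⟨L, hL⟩ := hψlip (s n)
      exact ⟨1 * L, clamp01_lip.comp hL⟩
    · exact (hψsupp (s n)).comp_left clamp01_zero
  · -- a.e. convergence via Borel–Cantelli / summability
    have hmeas : ∀ n, Measurable fun x =>
        ENNReal.ofReal (|ψ (s n) x - 1| ^ (2 : ℝ)) := by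
      intro n
      obtain ⟨L, hL⟩ := hψlip (s n)
      have : Continuous fun x => |ψ (s n) x - 1| ^ (2 : ℝ) := by
        apply Continuous.rpow_const
        · exact (hL.continuous.sub continuous_const).abs
        · intro x; right; norm_num
      exact (ENNReal.continuous_ofReal.comp this).measurable
    have hsum : ∫⁻ x, ∑' n, ENNReal.ofReal (|ψ (s n) x - 1| ^ (2 : ℝ)) ∂μ ≠ ∞ := by
      rw [lintegral_tsum fun n => (hmeas n).aemeasurable]
      have hle : ∑' n, (∫⁻ x, ENNReal.ofReal (|ψ (s n) x - 1| ^ (2 : ℝ)) ∂μ)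
          ≤ ∑' n : ℕ, (2 : ℝ≥0∞)⁻¹ ^ n := ENNReal.tsum_le_tsum hs
      refine ne_top_of_le_ne_top ?_ hle
      rw [ENNReal.tsum_geometric]
      simp
    have hae : ∀ᵐ x ∂μ, (∑' n, ENNReal.ofReal (|ψ (s n) x - 1| ^ (2 : ℝ))) ≠ ∞ :=
      ae_lt_top (Measurable.ennreal_tsum hmeas) hsum |>.mono fun x hx => hx.ne
    filter_upwards [hae] with x hx
    have h0 : Tendsto (fun n => ENNReal.ofReal (|ψ (s n) x - 1| ^ (2 : ℝ)))
        atTop (nhds 0) := ENNReal.tendsto_atTop_zero_of_tsum_ne_top hx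
    have h1 : Tendsto (fun n => |ψ (s n) x - 1| ^ (2 : ℝ)) atTop (nhds 0) := by
      have h := (ENNReal.tendsto_toReal (a := 0) (by simp)).comp h0
      have key : ∀ n, (ENNReal.ofReal (|ψ (s n) x - 1| ^ (2 : ℝ))).toReal
          = |ψ (s n) x - 1| ^ (2 : ℝ) :=
        fun n => ENNReal.toReal_ofReal (Real.rpow_nonneg (abs_nonneg _) _)
      simpa only [Function.comp_def, key, ENNReal.toReal_zero] using h
    have h2 : Tendsto (fun n => |ψ (s n) x - 1|) atTop (nhds 0) := by
      have h3 := h1.rpow_const (p := (2 : ℝ)⁻¹) (Or.inr (by norm_num))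
      have key : ∀ n, (|ψ (s n) x - 1| ^ (2 : ℝ)) ^ (2 : ℝ)⁻¹ = |ψ (s n) x - 1| := by
        intro n
        rw [← Real.rpow_mul (abs_nonneg _)]
        norm_num
      have hz : ((0:ℝ) ^ (2:ℝ)⁻¹) = 0 := Real.zero_rpow (by norm_num)
      rw [hz] at h3
      simpa only [key] using h3
    have h4 : Tendsto (fun n => ψ (s n) x) atTop (nhds 1) := by
      rw [tendsto_iff_dist_tendsto_zero]
      simpa [Real.dist_eq] using h2
    have := (clamp01_continuous.tendsto 1).comp h4
    simpa [Function.comp_def, clamp01_one] using this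
  · -- energy convergence by domination
    have hDle : ∀ n, (∫⁻ x, ENNReal.ofReal (D (fun y => clamp01 (ψ (s n) y)) x ^ (2 : ℝ)) ∂μ)
        ≤ ∫⁻ x, ENNReal.ofReal (D (ψ (s n)) x ^ (2 : ℝ)) ∂μ := by
      intro n
      apply lintegral_mono
      intro x
      apply ENNReal.ofReal_le_ofReal
      apply Real.rpow_le_rpow (hDnn _ x) _ (by norm_num)
      exact hDcontract (ψ (s n)) clamp01 clamp01_lip x
    have hsub : Tendsto (fun n => ∫⁻ x, ENNReal.ofReal (D (ψ (s n)) x ^ (2 : ℝ)) ∂μ)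
        atTop (nhds 0) := hψD.comp hs_mono.tendsto_atTop
    exact tendsto_of_tendsto_of_tendsto_of_le_of_le tendsto_const_nhds hsub
      (fun n => zero_le) hDle
end
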